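/- Conversely, any complex subspace L ⊂ (V ⊕ V*) ⊗ ℂ that is maximal isotropic for the natural pairing and satisfies L ∩ L̄ = 0 is the +i eigenspace of a unique orthogonal endomorphism J of V ⊕ V* with J² = −1. -/

import Mathlib

/- STATEMENT 5: Any complex subspace L ⊂ (V ⊕ V*) ⊗ ℂ which is maximal
   isotropic for the (complex-bilinearly extended) natural pairing and
   satisfies L ∩ L̄ = 0 is the +i eigenspace of a unique orthogonal
   endomorphism J of V ⊕ V* with J² = −1. -/

open Module
open scoped TensorProduct

noncomputable section

def naturalPairing (V : Type*) [AddCommGroup V] [Module ℝ V] :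
    LinearMap.BilinForm ℝ (V × Module.Dual ℝ V) :=
  LinearMap.mk₂ ℝ (fun v w => (v.2 w.1 + w.2 v.1) / 2)
    (by intro m₁ m₂ n; simp [map_add]; ring)
    (by intro c m n; simp; ring)
    (by intro m n₁ n₂; simp [map_add]; ring)
    (by intro c m n; simp; ring)

/-- The complexification `(V ⊕ V*) ⊗ ℂ`. -/
def WC (V : Type*) [AddCommGroup V] [Module ℝ V] : Type _ :=
  ℂ ⊗[ℝ] (V × Module.Dual ℝ V)

instance (V : Type*) [AddCommGroup V] [Module ℝ V] : AddCommGroup (WC V) :=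
  TensorProduct.addCommGroup

instance (V : Type*) [AddCommGroup V] [Module ℝ V] : Module ℂ (WC V) :=
  TensorProduct.leftModule

instance (V : Type*) [AddCommGroup V] [Module ℝ V] : Module ℝ (WC V) := by
  unfold WC; infer_instance

def naturalPairingC (V : Type*) [AddCommGroup V] [Module ℝ V] :
    LinearMap.BilinForm ℂ (WC V) :=
  (naturalPairing V).baseChange ℂ

def cplx {V : Type*} [AddCommGroup V] [Module ℝ V]
    (J : (V × Module.Dual ℝ V) →ₗ[ℝ] (V × Module.Dual ℝ V)) : WC V →ₗ[ℂ] WC V :=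
  LinearMap.baseChange ℂ J

def conjW (V : Type*) [AddCommGroup V] [Module ℝ V] : WC V →ₗ[ℝ] WC V :=
  LinearMap.rTensor (V × Module.Dual ℝ V) (Complex.conjAe.toLinearMap : ℂ →ₗ[ℝ] ℂ)

set_option linter.unusedSectionVars false
section Aux
variable (V : Type*) [AddCommGroup V] [Module ℝ V]
instance : IsScalarTower ℝ ℂ (WC V) := by unfold WC; infer_instance
instance : SMulCommClass ℝ ℂ (WC V) := by unfold WC; infer_instance
instance [FiniteDimensional ℝ V] : FiniteDimensional ℂ (WC V) := by unfold WC; infer_instance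
instance [FiniteDimensional ℝ V] : FiniteDimensional ℝ (WC V) := by unfold WC; infer_instance

def iotaW : (V × Module.Dual ℝ V) →ₗ[ℝ] WC V := TensorProduct.mk ℝ ℂ _ 1
def reW : WC V →ₗ[ℝ] (V × Module.Dual ℝ V) :=
  (TensorProduct.lid ℝ _).toLinearMap ∘ₗ LinearMap.rTensor _ Complex.reLm
def imW : WC V →ₗ[ℝ] (V × Module.Dual ℝ V) :=
  (TensorProduct.lid ℝ _).toLinearMap ∘ₗ LinearMap.rTensor _ Complex.imLm

variable {V}
lemma WC_induction_on {motive : WC V → Prop} (x : WC V) (zero : motive 0)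
    (tmul : ∀ (c : ℂ) (w : V × Module.Dual ℝ V), motive (c ⊗ₜ w))
    (add : ∀ x y : WC V, motive x → motive y → motive (x + y)) : motive x :=
  TensorProduct.induction_on x zero tmul add
lemma reW_tmul (c : ℂ) (w : V × Module.Dual ℝ V) : reW V (c ⊗ₜ w) = c.re • w := rfl
lemma imW_tmul (c : ℂ) (w : V × Module.Dual ℝ V) : imW V (c ⊗ₜ w) = c.im • w := rfl
lemma reW_iota (w : V × Module.Dual ℝ V) : reW V (iotaW V w) = w := by
  show reW V ((1:ℂ) ⊗ₜ w) = w; rw [reW_tmul]; simp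
lemma smul_one_tmul (d : ℂ) (w : V × Module.Dual ℝ V) :
    d • (((1:ℂ) ⊗ₜ[ℝ] w : ℂ ⊗[ℝ] (V × Module.Dual ℝ V)) : WC V) = d ⊗ₜ w := by
  rw [TensorProduct.smul_tmul', smul_eq_mul, mul_one]

lemma reprW (x : WC V) : iotaW V (reW V x) + Complex.I • iotaW V (imW V x) = x := by
  induction x using WC_induction_on with
  | zero => simp
  | tmul c w =>
      show ((1:ℂ) ⊗ₜ (c.re • w) : WC V) + Complex.I • (((1:ℂ) ⊗ₜ (c.im • w) : WC V)) = c ⊗ₜ w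
      rw [TensorProduct.tmul_smul, TensorProduct.tmul_smul, smul_comm,
        ← smul_one_tmul c]
      rw [← algebraMap_smul ℂ c.re ((1:ℂ) ⊗ₜ w : WC V),
        ← algebraMap_smul ℂ c.im (Complex.I • ((1:ℂ) ⊗ₜ w : WC V)), smul_smul, ← add_smul]
      congr 1
      simp [Complex.ext_iff]
  | add x y hx hy =>
      simp only [map_add, smul_add]
      conv_rhs => rw [← hx, ← hy]
      abel

lemma conjW_tmul (c : ℂ) (w : V × Module.Dual ℝ V) :
    conjW V ((c ⊗ₜ w : ℂ ⊗[ℝ] (V × Module.Dual ℝ V)) : WC V) = (starRingEnd ℂ) c ⊗ₜ w := rfl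

lemma conjW_conjW (x : WC V) : conjW V (conjW V x) = x := by
  induction x using WC_induction_on with
  | zero => simp
  | tmul c w => rw [conjW_tmul, conjW_tmul]; simp; rfl
  | add x y hx hy => simp only [map_add, hx, hy]

lemma conjW_smul (c : ℂ) (x : WC V) :
    conjW V (c • x) = (starRingEnd ℂ) c • conjW V x := by
  induction x using WC_induction_on with
  | zero => simp
  | tmul d w =>
      erw [show (c • (d ⊗ₜ w : ℂ ⊗[ℝ] _) : WC V) = (c*d) ⊗ₜ w by
        rw [TensorProduct.smul_tmul']; rfl]
      erw [conjW_tmul, conjW_tmul, TensorProduct.smul_tmul', smul_eq_mul, map_mul]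
  | add x y hx hy => simp only [smul_add, map_add, hx, hy]

lemma conjW_iota (w : V × Module.Dual ℝ V) : conjW V (iotaW V w) = iotaW V w := by
  show conjW V (((1:ℂ) ⊗ₜ w : ℂ ⊗[ℝ] _) : WC V) = _
  rw [conjW_tmul]; simp; rfl

lemma reW_conjW (x : WC V) : reW V (conjW V x) = reW V x := by
  induction x using WC_induction_on with
  | zero => simp
  | tmul c w => rw [conjW_tmul, reW_tmul, reW_tmul]; simp
  | add x y hx hy => simp only [map_add, hx, hy]

lemma imW_conjW (x : WC V) : imW V (conjW V x) = - imW V x := by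
  induction x using WC_induction_on with
  | zero => simp
  | tmul c w => rw [conjW_tmul, imW_tmul, imW_tmul]; exact neg_smul c.im w
  | add x y hx hy => simp only [map_add, hx, hy]; abel

lemma real_of_conj_fixed {x : WC V} (h : conjW V x = x) : x = iotaW V (reW V x) := by
  have him : imW V x = 0 := by
    have h2 := imW_conjW x
    rw [h] at h2
    have : (2:ℝ) • imW V x = 0 := by rw [two_smul]; nth_rewrite 1 [h2]; abel
    simpa using (smul_eq_zero.mp this).resolve_left (by norm_num)
  have := reprW x
  rw [him] at this
  simp only [map_zero, smul_zero, add_zero] at this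
  exact this.symm

def conjS : WC V →ₛₗ[starRingEnd ℂ] WC V :=
  { toFun := conjW V
    map_add' := map_add _
    map_smul' := fun c x => conjW_smul c x }

variable (L : Submodule ℂ (WC V))

def Lbar : Submodule ℂ (WC V) := L.map (conjS (V := V))

lemma mem_Lbar_iff {x : WC V} : x ∈ Lbar L ↔ conjW V x ∈ L := by
  constructor
  · rintro ⟨y, hy, rfl⟩
    show conjW V (conjW V y) ∈ L
    rw [conjW_conjW]; exact hy
  · intro h
    exact ⟨conjW V x, h, conjW_conjW x⟩

lemma coe_Lbar : (Lbar L : Set (WC V)) = conjW V '' (L : Set (WC V)) := rfl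

def conjL : L ≃ₗ[ℝ] Lbar L where
  toFun x := ⟨conjW V x, (mem_Lbar_iff L).2 (by rw [conjW_conjW]; exact x.2)⟩
  map_add' x y := by ext; simp
  map_smul' r x := by ext; simp
  invFun y := ⟨conjW V y, (mem_Lbar_iff L).1 y.2⟩
  left_inv x := by ext; exact conjW_conjW _
  right_inv y := by ext; exact conjW_conjW _

instance freeSub (L : Submodule ℂ (WC V)) : Module.Free ℂ L :=
  Module.Free.of_divisionRing ℂ L

lemma finrank_Lbar : finrank ℂ (Lbar L) = finrank ℂ L := by
  have h1 : finrank ℝ ℂ * finrank ℂ L = finrank ℝ L :=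
    Module.finrank_mul_finrank ℝ ℂ L
  have h2 : finrank ℝ ℂ * finrank ℂ (Lbar L) = finrank ℝ (Lbar L) :=
    Module.finrank_mul_finrank ℝ ℂ (Lbar L)
  have h3 : finrank ℝ L = finrank ℝ (Lbar L) := (conjL L).finrank_eq
  have h4 : finrank ℝ ℂ = 2 := Complex.finrank_real_complex
  rw [h3] at h1
  rw [h4] at h1 h2
  omega

variable [FiniteDimensional ℝ V]

lemma finrank_WC : finrank ℂ (WC V) = 2 * finrank ℝ V := by
  have h : finrank ℂ (WC V) = finrank ℝ (V × Module.Dual ℝ V) :=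
    Module.finrank_baseChange
  rw [h, Module.finrank_prod, Subspace.dual_finrank_eq]; ring

lemma isCompl_Lbar
    (hmax : Module.finrank ℂ L = Module.finrank ℝ V)
    (hreal : (L : Set (WC V)) ∩ (conjW V '' (L : Set (WC V))) = {0}) :
    IsCompl L (Lbar L) := by
  have hdisj : Disjoint L (Lbar L) := by
    rw [Submodule.disjoint_def]
    intro x hx hx'
    have hm : x ∈ (L : Set (WC V)) ∩ (conjW V '' (L : Set (WC V))) := ⟨hx, hx'⟩
    rw [hreal] at hm
    exact hm
  refine ⟨hdisj, codisjoint_iff.2 ?_⟩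
  apply Submodule.eq_top_of_finrank_eq
  have h5 := Submodule.finrank_sup_add_finrank_inf_eq L (Lbar L)
  rw [disjoint_iff.1 hdisj, finrank_bot, add_zero, finrank_Lbar, hmax] at h5
  rw [h5, finrank_WC]; ring

lemma pairingC_tmul (c d : ℂ) (v w : V × Module.Dual ℝ V) :
    naturalPairingC V ((c ⊗ₜ v : ℂ ⊗[ℝ] _) : WC V) ((d ⊗ₜ w : ℂ ⊗[ℝ] _) : WC V)
      = (naturalPairing V v w) • (c * d) :=
  LinearMap.BilinForm.baseChange_tmul _ _ _ _ _

lemma pairingC_conj (x y : WC V) :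
    naturalPairingC V (conjW V x) (conjW V y)
      = (starRingEnd ℂ) (naturalPairingC V x y) := by
  induction x using WC_induction_on with
  | zero => simp
  | add x₁ x₂ h₁ h₂ => simp only [map_add, LinearMap.add_apply, h₁, h₂]
  | tmul c v =>
    induction y using WC_induction_on with
    | zero => simp
    | add y₁ y₂ h₁ h₂ => simp only [map_add, h₁, h₂]
    | tmul d w =>
      rw [conjW_tmul, conjW_tmul, pairingC_tmul, pairingC_tmul]
      simp [Complex.real_smul, map_mul, Complex.conj_ofReal]

variable {L}

def JCmap (h : IsCompl L (Lbar L)) : WC V →ₗ[ℂ] WC V :=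
  Complex.I • (L.subtype ∘ₗ Submodule.linearProjOfIsCompl L (Lbar L) h) -
  Complex.I • ((Lbar L).subtype ∘ₗ Submodule.linearProjOfIsCompl (Lbar L) L h.symm)

lemma JCmap_eq (h : IsCompl L (Lbar L)) (x : WC V) :
    JCmap h x = Complex.I • (Submodule.linearProjOfIsCompl L (Lbar L) h x : WC V)
      - Complex.I • (Submodule.linearProjOfIsCompl (Lbar L) L h.symm x : WC V) := rfl

lemma decompW (h : IsCompl L (Lbar L)) (x : WC V) :
    (Submodule.linearProjOfIsCompl L (Lbar L) h x : WC V)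
      + (Submodule.linearProjOfIsCompl (Lbar L) L h.symm x : WC V) = x :=
  Submodule.projection_add_projection_eq_self h x

lemma JCmap_of_mem_L (h : IsCompl L (Lbar L)) {x : WC V} (hx : x ∈ L) :
    JCmap h x = Complex.I • x := by
  rw [JCmap_eq]
  erw [show Submodule.linearProjOfIsCompl L (Lbar L) h x = ⟨x, hx⟩ from
    Submodule.linearProjOfIsCompl_apply_left h ⟨x, hx⟩,
    Submodule.projectionOnto_apply_of_mem_right h.symm hx]
  simp

lemma JCmap_of_mem_Lbar (h : IsCompl L (Lbar L)) {x : WC V} (hx : x ∈ Lbar L) :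
    JCmap h x = -(Complex.I • x) := by
  rw [JCmap_eq]
  erw [show Submodule.linearProjOfIsCompl (Lbar L) L h.symm x = ⟨x, hx⟩ from
    Submodule.linearProjOfIsCompl_apply_left h.symm ⟨x, hx⟩,
    Submodule.projectionOnto_apply_of_mem_right h hx]
  simp

lemma JCmap_JCmap (h : IsCompl L (Lbar L)) (x : WC V) :
    JCmap h (JCmap h x) = -x := by
  set a := (Submodule.linearProjOfIsCompl L (Lbar L) h x : WC V) with ha
  set b := (Submodule.linearProjOfIsCompl (Lbar L) L h.symm x : WC V) with hb
  have haL : a ∈ L := (Submodule.linearProjOfIsCompl L (Lbar L) h x).2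
  have hbL : b ∈ Lbar L := (Submodule.linearProjOfIsCompl (Lbar L) L h.symm x).2
  rw [JCmap_eq h x, ← ha, ← hb, map_sub, map_smul, map_smul,
    JCmap_of_mem_L h haL, JCmap_of_mem_Lbar h hbL]
  rw [smul_neg, smul_smul, smul_smul, Complex.I_mul_I, neg_one_smul, neg_one_smul, neg_neg]
  rw [show -a - b = -(a+b) by abel, decompW h x]

lemma mem_L_iff_JCmap (h : IsCompl L (Lbar L)) (x : WC V) :
    x ∈ L ↔ JCmap h x = Complex.I • x := by
  refine ⟨fun hx => JCmap_of_mem_L h hx, fun hx => ?_⟩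
  set a := (Submodule.linearProjOfIsCompl L (Lbar L) h x : WC V) with ha
  set b := (Submodule.linearProjOfIsCompl (Lbar L) L h.symm x : WC V) with hb
  have haL : a ∈ L := (Submodule.linearProjOfIsCompl L (Lbar L) h x).2
  have hd : a + b = x := decompW h x
  rw [JCmap_eq h x, ← ha, ← hb, ← hd, smul_add] at hx
  have h2 : Complex.I • a + -(Complex.I • b) = Complex.I • a + Complex.I • b := by
    rw [← sub_eq_add_neg]; exact hx
  have h3 : -(Complex.I • b) = Complex.I • b := add_left_cancel h2
  have h4 : (2:ℂ) • (Complex.I • b) = 0 := by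
    rw [two_smul]; nth_rewrite 1 [← h3]; abel
  have h5 : b = 0 := by
    rcases smul_eq_zero.mp h4 with h | h
    · norm_num at h
    rcases smul_eq_zero.mp h with h | h
    · exact absurd h Complex.I_ne_zero
    · exact h
  rw [← hd, h5, add_zero]
  exact haL

lemma conjW_mem_Lbar {x : WC V} (hx : x ∈ L) : conjW V x ∈ Lbar L :=
  (mem_Lbar_iff L).2 (by rw [conjW_conjW]; exact hx)

lemma JCmap_conjW (h : IsCompl L (Lbar L)) (x : WC V) :
    JCmap h (conjW V x) = conjW V (JCmap h x) := by
  set a := (Submodule.linearProjOfIsCompl L (Lbar L) h x : WC V) with ha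
  set b := (Submodule.linearProjOfIsCompl (Lbar L) L h.symm x : WC V) with hb
  have haL : a ∈ L := (Submodule.linearProjOfIsCompl L (Lbar L) h x).2
  have hbL : b ∈ Lbar L := (Submodule.linearProjOfIsCompl (Lbar L) L h.symm x).2
  have h1 : conjW V a ∈ Lbar L := conjW_mem_Lbar haL
  have h2 : conjW V b ∈ L := (mem_Lbar_iff L).1 hbL
  have hd : a + b = x := decompW h x
  calc JCmap h (conjW V x) = JCmap h (conjW V a) + JCmap h (conjW V b) := by
        rw [← hd, map_add, map_add]
    _ = -(Complex.I • conjW V a) + Complex.I • conjW V b := by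
        rw [JCmap_of_mem_Lbar h h1, JCmap_of_mem_L h h2]
    _ = conjW V (JCmap h x) := by
        rw [JCmap_eq h x, ← ha, ← hb, map_sub, conjW_smul, conjW_smul, Complex.conj_I,
          neg_smul, neg_smul]
        abel

def Jreal (h : IsCompl L (Lbar L)) : (V × Module.Dual ℝ V) →ₗ[ℝ] (V × Module.Dual ℝ V) :=
  reW V ∘ₗ (JCmap h).restrictScalars ℝ ∘ₗ iotaW V

lemma iota_Jreal (h : IsCompl L (Lbar L)) (w : V × Module.Dual ℝ V) :
    iotaW V (Jreal h w) = JCmap h (iotaW V w) := by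
  have hfix : conjW V (JCmap h (iotaW V w)) = JCmap h (iotaW V w) := by
    rw [← JCmap_conjW, conjW_iota]
  exact (real_of_conj_fixed hfix).symm

lemma iotaW_def (w : V × Module.Dual ℝ V) :
    iotaW V w = (((1:ℂ) ⊗ₜ w : ℂ ⊗[ℝ] _) : WC V) := rfl

lemma cplx_tmul (K : (V × Module.Dual ℝ V) →ₗ[ℝ] (V × Module.Dual ℝ V)) (c : ℂ)
    (w : V × Module.Dual ℝ V) :
    cplx K ((c ⊗ₜ w : ℂ ⊗[ℝ] _) : WC V) = ((c ⊗ₜ (K w) : ℂ ⊗[ℝ] _) : WC V) := rfl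

lemma cplx_Jreal (h : IsCompl L (Lbar L)) (x : WC V) :
    cplx (Jreal h) x = JCmap h x := by
  induction x using WC_induction_on with
  | zero => simp
  | add x y hx hy => simp only [map_add, hx, hy]
  | tmul c w =>
      have h1 : ((c ⊗ₜ w : ℂ ⊗[ℝ] _) : WC V) = c • iotaW V w := by
        erw [iotaW_def, smul_one_tmul]
      have h2 : ((c ⊗ₜ (Jreal h w) : ℂ ⊗[ℝ] _) : WC V) = c • iotaW V (Jreal h w) := by
        erw [iotaW_def, smul_one_tmul]
      rw [cplx_tmul, h2, iota_Jreal, h1, map_smul]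

lemma cplx_conjW (K : (V × Module.Dual ℝ V) →ₗ[ℝ] (V × Module.Dual ℝ V)) (x : WC V) :
    conjW V (cplx K x) = cplx K (conjW V x) := by
  induction x using WC_induction_on with
  | zero => simp
  | add x y hx hy => simp only [map_add, hx, hy]
  | tmul c w => rw [cplx_tmul, conjW_tmul, conjW_tmul, cplx_tmul]

lemma pairingC_JCmap (h : IsCompl L (Lbar L))
    (hiso : ∀ x ∈ L, ∀ y ∈ L, naturalPairingC V x y = 0) (x y : WC V) :
    naturalPairingC V (JCmap h x) (JCmap h y) = naturalPairingC V x y := by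
  have hisobar : ∀ x ∈ Lbar L, ∀ y ∈ Lbar L, naturalPairingC V x y = 0 := by
    intro x hx y hy
    have h1 : naturalPairingC V (conjW V (conjW V x)) (conjW V (conjW V y))
        = (starRingEnd ℂ) (naturalPairingC V (conjW V x) (conjW V y)) := pairingC_conj _ _
    rw [conjW_conjW, conjW_conjW] at h1
    rw [h1, hiso _ ((mem_Lbar_iff L).1 hx) _ ((mem_Lbar_iff L).1 hy), map_zero]
  set a := (Submodule.linearProjOfIsCompl L (Lbar L) h x : WC V) with ha
  set b := (Submodule.linearProjOfIsCompl (Lbar L) L h.symm x : WC V) with hb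
  set a' := (Submodule.linearProjOfIsCompl L (Lbar L) h y : WC V) with ha'
  set b' := (Submodule.linearProjOfIsCompl (Lbar L) L h.symm y : WC V) with hb'
  have e1 : naturalPairingC V a a' = 0 :=
    hiso _ (Submodule.linearProjOfIsCompl L (Lbar L) h x).2
      _ (Submodule.linearProjOfIsCompl L (Lbar L) h y).2
  have e2 : naturalPairingC V b b' = 0 :=
    hisobar _ (Submodule.linearProjOfIsCompl (Lbar L) L h.symm x).2
      _ (Submodule.linearProjOfIsCompl (Lbar L) L h.symm y).2
  rw [JCmap_eq h x, JCmap_eq h y, ← ha, ← hb, ← ha', ← hb']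
  conv_rhs => rw [← decompW h x, ← decompW h y, ← ha, ← hb, ← ha', ← hb']
  simp only [map_sub, map_add, map_smul, LinearMap.sub_apply, LinearMap.add_apply,
    LinearMap.smul_apply, e1, e2, smul_eq_mul]
  ring_nf
  rw [Complex.I_sq]
  ring

lemma pairing_Jreal (h : IsCompl L (Lbar L))
    (hiso : ∀ x ∈ L, ∀ y ∈ L, naturalPairingC V x y = 0)
    (v w : V × Module.Dual ℝ V) :
    naturalPairing V (Jreal h v) (Jreal h w) = naturalPairing V v w := by
  have key : ∀ a b : V × Module.Dual ℝ V,
      naturalPairingC V (iotaW V a) (iotaW V b) = ((naturalPairing V a b : ℝ) : ℂ) := by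
    intro a b
    rw [iotaW_def, iotaW_def, pairingC_tmul]
    simp [Complex.real_smul]
  have h1 : ((naturalPairing V (Jreal h v) (Jreal h w) : ℝ) : ℂ)
      = ((naturalPairing V v w : ℝ) : ℂ) := by
    rw [← key, ← key, iota_Jreal, iota_Jreal, pairingC_JCmap h hiso]
  exact_mod_cast h1

end Aux

theorem maximal_isotropic_determines_unique_gacs
    (V : Type*) [AddCommGroup V] [Module ℝ V] [FiniteDimensional ℝ V]
    (L : Submodule ℂ (WC V))
    -- L is maximal isotropic:
    (hiso : ∀ x ∈ L, ∀ y ∈ L, naturalPairingC V x y = 0)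
    (hmax : Module.finrank ℂ L = Module.finrank ℝ V)
    -- L ∩ L̄ = 0:
    (hreal : (L : Set (WC V)) ∩ (conjW V '' (L : Set (WC V))) = {0}) :
    ∃! J : (V × Module.Dual ℝ V) →ₗ[ℝ] (V × Module.Dual ℝ V),
      (∀ v w, naturalPairing V (J v) (J w) = naturalPairing V v w) ∧
      (∀ v, J (J v) = -v) ∧
      (∀ x : WC V, x ∈ L ↔ cplx J x = Complex.I • x) := by
  have h : IsCompl L (Lbar L) := isCompl_Lbar L hmax hreal
  have hinj : Function.Injective (iotaW V) := by
    intro a b hab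
    have := congrArg (reW V) hab
    simpa [reW_iota] using this
  refine ⟨Jreal h, ⟨pairing_Jreal h hiso, ?_, ?_⟩, ?_⟩
  · intro v
    apply hinj
    calc iotaW V (Jreal h (Jreal h v)) = JCmap h (iotaW V (Jreal h v)) := iota_Jreal h _
      _ = JCmap h (JCmap h (iotaW V v)) := by rw [iota_Jreal]
      _ = -(iotaW V v) := JCmap_JCmap h _
      _ = iotaW V (-v) := (map_neg _ _).symm
  · intro x
    rw [cplx_Jreal h]
    exact mem_L_iff_JCmap h x
  · rintro J' ⟨-, -, hJ3⟩
    have hC : ∀ x : WC V, cplx J' x = JCmap h x := by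
      intro x
      set a := (Submodule.linearProjOfIsCompl L (Lbar L) h x : WC V) with ha
      set b := (Submodule.linearProjOfIsCompl (Lbar L) L h.symm x : WC V) with hb
      have haL : a ∈ L := (Submodule.linearProjOfIsCompl L (Lbar L) h x).2
      have hbL : b ∈ Lbar L := (Submodule.linearProjOfIsCompl (Lbar L) L h.symm x).2
      have hca : cplx J' a = Complex.I • a := (hJ3 a).1 haL
      have hcb : cplx J' b = -(Complex.I • b) := by
        have h2 : conjW V b ∈ L := (mem_Lbar_iff L).1 hbL
        have h3 : cplx J' (conjW V b) = Complex.I • conjW V b := (hJ3 _).1 h2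
        have h4 := congrArg (conjW V) h3
        rw [cplx_conjW, conjW_conjW, conjW_smul, conjW_conjW, Complex.conj_I, neg_smul] at h4
        exact h4
      calc cplx J' x = cplx J' a + cplx J' b := by
            conv_lhs => rw [← decompW h x]
            rw [map_add]
        _ = Complex.I • a - Complex.I • b := by rw [hca, hcb, sub_eq_add_neg]
        _ = JCmap h x := (JCmap_eq h x).symm
    refine LinearMap.ext fun w => ?_
    apply hinj
    have h5 : iotaW V (J' w) = cplx J' (iotaW V w) := by
      simp only [iotaW_def, cplx_tmul]; rfl
    rw [h5, hC, ← iota_Jreal]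

end
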